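/- Let $\mathcal{M}$ be the parabolic Hardy–Littlewood maximal operator on $\mathbb{R}^{N+1}$. If $u$ is locally integrable, $(x_1,t_1)$ is a point with $\mathcal{M}(u)(x_1,t_1)\le\lambda$, and $(x_1,t_1)$ belongs to the cylinder $\tilde{Q}_r(x,t)$, then for every $(y,t')\in \tilde{Q}_r(x,t)$ one has $\mathcal{M}(u)(y,t')\le\max\{\mathcal{M}(\chi_{\tilde{Q}_{2r}(x,t)}u)(y,t'),\,3^{N+2}\lambda\}$. -/

import Mathlib

open MeasureTheory Set ENNReal

noncomputable section

abbrev ESp (N : ℕ) := EuclideanSpace ℝ (Fin N) × ℝ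

def tQ (N : ℕ) (ρ : ℝ) (z : ESp N) : Set (ESp N) :=
  (Metric.ball z.1 ρ) ×ˢ (Set.Ioo (z.2 - ρ ^ 2 / 2) (z.2 + ρ ^ 2 / 2))

/-- The parabolic Hardy–Littlewood maximal function. -/
def pM (N : ℕ) (f : ESp N → ℝ) (z : ESp N) : ℝ≥0∞ :=
  ⨆ (ρ : ℝ) (_ : 0 < ρ),
    (∫⁻ y in tQ N ρ z, ENNReal.ofReal |f y|) / volume (tQ N ρ z)

lemma measurableSet_tQ (N : ℕ) (ρ : ℝ) (z : ESp N) : MeasurableSet (tQ N ρ z) :=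
  Metric.isOpen_ball.measurableSet.prod measurableSet_Ioo

lemma vol_tQ (N : ℕ) {ρ : ℝ} (hρ : 0 < ρ) (z : ESp N) :
    volume (tQ N ρ z) = ENNReal.ofReal (ρ ^ N) *
      volume (Metric.ball (0 : EuclideanSpace ℝ (Fin N)) 1) * ENNReal.ofReal (ρ ^ 2) := by
  rw [tQ, Measure.volume_eq_prod, Measure.prod_prod, Real.volume_Ioo,
    Measure.addHaar_ball_of_pos volume _ hρ, finrank_euclideanSpace_fin]
  congr 1
  ring

lemma vol_tQ_pos (N : ℕ) {ρ : ℝ} (hρ : 0 < ρ) (z : ESp N) :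
    volume (tQ N ρ z) ≠ 0 := by
  rw [vol_tQ N hρ]
  have h1 : (0:ℝ) < ρ ^ N := pow_pos hρ N
  have h2 : (0:ℝ) < ρ ^ 2 := pow_pos hρ 2
  have hb : (0:ℝ≥0∞) < volume (Metric.ball (0 : EuclideanSpace ℝ (Fin N)) 1) :=
    Metric.isOpen_ball.measure_pos volume ⟨0, Metric.mem_ball_self one_pos⟩
  exact mul_ne_zero (mul_ne_zero (by simpa using not_le.mpr h1) hb.ne') (by simpa using not_le.mpr h2)

lemma vol_tQ_ne_top (N : ℕ) {ρ : ℝ} (hρ : 0 < ρ) (z : ESp N) :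
    volume (tQ N ρ z) ≠ ∞ := by
  rw [vol_tQ N hρ]
  exact ENNReal.mul_ne_top (ENNReal.mul_ne_top ENNReal.ofReal_ne_top
    measure_ball_lt_top.ne) ENNReal.ofReal_ne_top

theorem stmt4 (N : ℕ) (u : ESp N → ℝ) (hu : LocallyIntegrable u volume)
    (hupos : ∀ z, 0 ≤ u z) (lam : ℝ) (hlam : 0 < lam)
    (r : ℝ) (hr : 0 < r) (z z₁ : ESp N) (hz₁ : z₁ ∈ tQ N r z)
    (hM : pM N u z₁ ≤ ENNReal.ofReal lam) :
    ∀ y ∈ tQ N r z,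
      pM N u y ≤
        max (pM N ((tQ N (2 * r) z).indicator u) y)
          (ENNReal.ofReal (3 ^ (N + 2) * lam)) := by
  intro y hy
  obtain ⟨hy1, hy2⟩ := hy
  obtain ⟨hz11, hz12⟩ := hz₁
  rw [pM]
  apply iSup₂_le
  intro ρ hρ
  rcases le_or_gt ρ r with hρr | hρr
  · -- small radius: tQ ρ y ⊆ tQ (2r) z
    refine le_trans ?_ (le_max_left _ _)
    have hsub : tQ N ρ y ⊆ tQ N (2 * r) z := by
      rintro ⟨p1, p2⟩ ⟨hp1, hp2⟩
      simp only [tQ, mem_prod, Metric.mem_ball, mem_Ioo] at *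
      constructor
      · calc dist p1 z.1 ≤ dist p1 y.1 + dist y.1 z.1 := dist_triangle _ _ _
          _ < ρ + r := add_lt_add hp1 hy1
          _ ≤ 2 * r := by linarith
      · have h2 : ρ ^ 2 ≤ r ^ 2 := by nlinarith
        constructor <;> nlinarith [hp2.1, hp2.2, hy2.1, hy2.2]
    have heq : (∫⁻ w in tQ N ρ y, ENNReal.ofReal |u w|) =
        ∫⁻ w in tQ N ρ y, ENNReal.ofReal |((tQ N (2 * r) z).indicator u) w| := by
      refine setLIntegral_congr_fun (measurableSet_tQ N ρ y) ?_
      intro w hw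
      dsimp only
      rw [Set.indicator_of_mem (hsub hw)]
    rw [heq]
    exact le_iSup₂ (f := fun ρ (_ : 0 < ρ) =>
      (∫⁻ w in tQ N ρ y, ENNReal.ofReal |((tQ N (2 * r) z).indicator u) w|) /
        volume (tQ N ρ y)) ρ hρ
  · -- large radius: tQ ρ y ⊆ tQ (3ρ) z₁
    refine le_trans ?_ (le_max_right _ _)
    have h3ρ : (0:ℝ) < 3 * ρ := by linarith
    have hsub : tQ N ρ y ⊆ tQ N (3 * ρ) z₁ := by
      rintro ⟨p1, p2⟩ ⟨hp1, hp2⟩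
      simp only [tQ, mem_prod, Metric.mem_ball, mem_Ioo] at *
      constructor
      · calc dist p1 z₁.1 ≤ dist p1 y.1 + dist y.1 z.1 + dist z.1 z₁.1 :=
              dist_triangle4 _ _ _ _
          _ < ρ + r + r := by
              have := dist_comm z.1 z₁.1
              gcongr
              rw [dist_comm]; exact hz11
          _ < 3 * ρ := by linarith
      · constructor <;> nlinarith [hp2.1, hp2.2, hy2.1, hy2.2, hz12.1, hz12.2]
    -- from hM
    have hbound : (∫⁻ w in tQ N (3 * ρ) z₁, ENNReal.ofReal |u w|) ≤
        ENNReal.ofReal lam * volume (tQ N (3 * ρ) z₁) := by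
      have h := le_trans (le_iSup₂ (f := fun ρ (_ : 0 < ρ) =>
        (∫⁻ w in tQ N ρ z₁, ENNReal.ofReal |u w|) / volume (tQ N ρ z₁)) (3 * ρ) h3ρ) hM
      rwa [ENNReal.div_le_iff (vol_tQ_pos N h3ρ z₁) (vol_tQ_ne_top N h3ρ z₁)] at h
    have hvol : volume (tQ N (3 * ρ) z₁) =
        ENNReal.ofReal (3 ^ (N + 2)) * volume (tQ N ρ y) := by
      rw [vol_tQ N h3ρ, vol_tQ N hρ]
      set B := volume (Metric.ball (0 : EuclideanSpace ℝ (Fin N)) 1) with hB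
      have key : ((3*ρ):ℝ)^N * (3*ρ)^2 = 3^(N+2) * (ρ^N * ρ^2) := by ring
      calc ENNReal.ofReal ((3*ρ)^N) * B * ENNReal.ofReal ((3*ρ)^2)
          = ENNReal.ofReal ((3*ρ)^N * (3*ρ)^2) * B := by
            rw [ENNReal.ofReal_mul (by positivity)]; ring
        _ = ENNReal.ofReal (3^(N+2) * (ρ^N * ρ^2)) * B := by rw [key]
        _ = ENNReal.ofReal (3^(N+2)) * (ENNReal.ofReal (ρ^N) * B * ENNReal.ofReal (ρ^2)) := by
            rw [ENNReal.ofReal_mul (by positivity), ENNReal.ofReal_mul (by positivity)]; ring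
    rw [ENNReal.div_le_iff (vol_tQ_pos N hρ y) (vol_tQ_ne_top N hρ y)]
    calc (∫⁻ w in tQ N ρ y, ENNReal.ofReal |u w|)
        ≤ ∫⁻ w in tQ N (3 * ρ) z₁, ENNReal.ofReal |u w| := lintegral_mono_set hsub
      _ ≤ ENNReal.ofReal lam * volume (tQ N (3 * ρ) z₁) := hbound
      _ = ENNReal.ofReal (3 ^ (N + 2) * lam) * volume (tQ N ρ y) := by
          rw [hvol, ENNReal.ofReal_mul (by positivity), ← mul_assoc,
            mul_comm (ENNReal.ofReal lam)]
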